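/- Consider the PID-controlled second-order system on ℝⁿ: trajectories x, ξ, u_I : ℝ → ℝⁿ satisfying x'(t) = ξ(t), ξ'(t) = b·ξ(t) + u(t) + u_B(x(t)) with u(t) = −k_P ∇φ(x(t)) − k_D ξ(t) + k_I u_I(t), and u_I'(t) = −k_P ∇φ(x(t)) − k_D ξ(t), where b, k_P, k_D, k_I, β are reals with k_P > 0, β > 0, k_I > 0, φ : ℝⁿ → ℝ is continuously differentiable, and u_B : ℝⁿ → ℝⁿ is continuously differentiable. Set a₁ = β k_I, a₂ = (k_D − b − k_I)/k_P, and for each point p ∈ ℝⁿ let A(p) = (1/(2k_P) − (b + k_I) β k_I / 2)·I + (β/2)·Du_B(p). Suppose that for all p ∈ ℝⁿ, a₁ is strictly greater than every row absolute sum of A(p) and a₂ is strictly greater than every column absolute sum of A(p). Then along any such trajectory, with V(t) = φ(x(t)) + (1/(2k_P))‖ξ(t)‖² + (β/2)‖k_I(u_I(t) − ξ(t)) + u_B(x(t))‖² and z(t) = k_I(u_I(t) − ξ(t)) + u_B(x(t)), one has V'(t) ≤ 0 for all t, and V'(t) = 0 if and only if ξ(t) = 0 and z(t) = 0. -/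

import Mathlib

open scoped RealInnerProductSpace

lemma pid_aux_quad {n : ℕ} {a₁ a₂ : ℝ} (M : Fin n → Fin n → ℝ)
    (hr : ∀ i, ∑ j, |M i j| < a₁) (hc : ∀ j, ∑ i, |M i j| < a₂)
    (ζ η : Fin n → ℝ) :
    (-(a₁ * ∑ i, ζ i ^ 2) - a₂ * ∑ i, η i ^ 2 + ∑ i, ∑ j, 2 * ζ i * M i j * η j ≤ 0)
    ∧ ((-(a₁ * ∑ i, ζ i ^ 2) - a₂ * ∑ i, η i ^ 2 + ∑ i, ∑ j, 2 * ζ i * M i j * η j = 0)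
        ↔ (∀ i, η i = 0) ∧ (∀ i, ζ i = 0)) := by
  have hterm : ∀ i j : Fin n, 2 * ζ i * M i j * η j ≤ |M i j| * ζ i ^ 2 + |M i j| * η j ^ 2 := by
    intro i j
    have h1 : 2 * ζ i * M i j * η j ≤ |2 * ζ i * M i j * η j| := le_abs_self _
    have h2 : |2 * ζ i * M i j * η j| = 2 * |ζ i| * |M i j| * |η j| := by
      rw [abs_mul, abs_mul, abs_mul, abs_two]
    nlinarith [mul_nonneg (abs_nonneg (M i j)) (sq_nonneg (|ζ i| - |η j|)),
      sq_abs (ζ i), sq_abs (η j), abs_nonneg (ζ i), abs_nonneg (η j), abs_nonneg (M i j)]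
  have hsum : ∑ i, ∑ j, 2 * ζ i * M i j * η j
      ≤ (∑ i, ζ i ^ 2 * ∑ j, |M i j|) + ∑ j, η j ^ 2 * ∑ i, |M i j| := by
    calc ∑ i, ∑ j, 2 * ζ i * M i j * η j
        ≤ ∑ i, ∑ j, (|M i j| * ζ i ^ 2 + |M i j| * η j ^ 2) :=
          Finset.sum_le_sum fun i _ => Finset.sum_le_sum fun j _ => hterm i j
      _ = (∑ i, ζ i ^ 2 * ∑ j, |M i j|) + ∑ j, η j ^ 2 * ∑ i, |M i j| := by
          simp only [Finset.sum_add_distrib]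
          congr 1
          · simp [Finset.mul_sum, mul_comm]
          · rw [Finset.sum_comm]
            simp [Finset.mul_sum, mul_comm]
  have hz_le : (∑ i, ζ i ^ 2 * ∑ j, |M i j|) ≤ a₁ * ∑ i, ζ i ^ 2 := by
    rw [Finset.mul_sum]
    refine Finset.sum_le_sum fun i _ => ?_
    rw [mul_comm a₁]
    exact mul_le_mul_of_nonneg_left (hr i).le (sq_nonneg _)
  have hη_le : (∑ j, η j ^ 2 * ∑ i, |M i j|) ≤ a₂ * ∑ j, η j ^ 2 := by
    rw [Finset.mul_sum]
    refine Finset.sum_le_sum fun j _ => ?_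
    rw [mul_comm a₂]
    exact mul_le_mul_of_nonneg_left (hc j).le (sq_nonneg _)
  have hz_lt : (∃ k, ζ k ≠ 0) → (∑ i, ζ i ^ 2 * ∑ j, |M i j|) < a₁ * ∑ i, ζ i ^ 2 := by
    rintro ⟨k, hk⟩
    rw [Finset.mul_sum]
    refine Finset.sum_lt_sum (fun i _ => by
      rw [mul_comm a₁]; exact mul_le_mul_of_nonneg_left (hr i).le (sq_nonneg _))
      ⟨k, Finset.mem_univ k, ?_⟩
    rw [mul_comm a₁]
    exact mul_lt_mul_of_pos_left (hr k) (by positivity)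
  have hη_lt : (∃ k, η k ≠ 0) → (∑ j, η j ^ 2 * ∑ i, |M i j|) < a₂ * ∑ j, η j ^ 2 := by
    rintro ⟨k, hk⟩
    rw [Finset.mul_sum]
    refine Finset.sum_lt_sum (fun j _ => by
      rw [mul_comm a₂]; exact mul_le_mul_of_nonneg_left (hc j).le (sq_nonneg _))
      ⟨k, Finset.mem_univ k, ?_⟩
    rw [mul_comm a₂]
    exact mul_lt_mul_of_pos_left (hc k) (by positivity)
  constructor
  · linarith
  · constructor
    · intro hE
      by_contra hcon
      rw [not_and_or] at hcon
      rcases hcon with h | h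
      · push_neg at h
        have := hη_lt h
        linarith
      · push_neg at h
        have := hz_lt h
        linarith
    · rintro ⟨hη, hζ⟩
      simp [hη, hζ]

/-- decrease of the Lyapunov function for the PID-controlled
second-order system on ℝⁿ with state-dependent bias, under Gershgorin-type
gain conditions; the derivative vanishes iff both the velocity and the
integral-error variable vanish. -/
theorem pid_lyapunov_decrease
    (n : ℕ) (b kP kD kI β : ℝ) (hkP : 0 < kP) (hβ : 0 < β) (hkI : 0 < kI)
    (φ : EuclideanSpace ℝ (Fin n) → ℝ) (hφ : ContDiff ℝ 1 φ)
    (uB : EuclideanSpace ℝ (Fin n) → EuclideanSpace ℝ (Fin n)) (huB : ContDiff ℝ 1 uB)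
    (a₁ a₂ : ℝ) (ha₁ : a₁ = β * kI) (ha₂ : a₂ = (kD - b - kI) / kP)
    (A : EuclideanSpace ℝ (Fin n) → Matrix (Fin n) (Fin n) ℝ)
    (hA : ∀ p i j, A p i j = (if i = j then 1 / (2 * kP) - (b + kI) * β * kI / 2 else 0)
        + (β / 2) * fderiv ℝ uB p (EuclideanSpace.single j 1) i)
    (hrow : ∀ p : EuclideanSpace ℝ (Fin n), ∀ i : Fin n, a₁ > ∑ j : Fin n, |A p i j|)
    (hcol : ∀ p : EuclideanSpace ℝ (Fin n), ∀ j : Fin n, a₂ > ∑ i : Fin n, |A p i j|)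
    (x ξ uI : ℝ → EuclideanSpace ℝ (Fin n))
    (u : ℝ → EuclideanSpace ℝ (Fin n))
    (hu : ∀ t, u t = -(kP • gradient φ (x t)) - kD • ξ t + kI • uI t)
    (hx : ∀ t, HasDerivAt x (ξ t) t)
    (hξ : ∀ t, HasDerivAt ξ (b • ξ t + u t + uB (x t)) t)
    (huI : ∀ t, HasDerivAt uI (-(kP • gradient φ (x t)) - kD • ξ t) t)
    (V : ℝ → ℝ)
    (hV : ∀ t, V t = φ (x t) + (1 / (2 * kP)) * ‖ξ t‖ ^ 2
        + (β / 2) * ‖kI • (uI t - ξ t) + uB (x t)‖ ^ 2)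
    (z : ℝ → EuclideanSpace ℝ (Fin n))
    (hz : ∀ t, z t = kI • (uI t - ξ t) + uB (x t)) :
    ∀ t, deriv V t ≤ 0 ∧ (deriv V t = 0 ↔ ξ t = 0 ∧ z t = 0) := by
  intro t
  have hinner : ∀ v w : EuclideanSpace ℝ (Fin n), ⟪v, w⟫ = ∑ i, v i * w i := by
    intro v w; simp [PiLp.inner_apply, RCLike.inner_apply, mul_comm]
  have hdecomp : ∀ v : EuclideanSpace ℝ (Fin n), v = ∑ j, v j • EuclideanSpace.single j 1 := by
    intro v; ext i; rw [WithLp.ofLp_sum, Finset.sum_apply]; simp [EuclideanSpace.single_apply]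
  -- (1) the derivative of V
  have hd : deriv V t = ⟪gradient φ (x t), ξ t⟫
      + (1 / (2 * kP)) * (⟪ξ t, b • ξ t + u t + uB (x t)⟫ + ⟪b • ξ t + u t + uB (x t), ξ t⟫)
      + (β / 2) * (⟪z t, kI • ((-(kP • gradient φ (x t)) - kD • ξ t) - (b • ξ t + u t + uB (x t)))
            + fderiv ℝ uB (x t) (ξ t)⟫
        + ⟪kI • ((-(kP • gradient φ (x t)) - kD • ξ t) - (b • ξ t + u t + uB (x t)))
            + fderiv ℝ uB (x t) (ξ t), z t⟫) := by
    have hVf : V = fun s => φ (x s) + (1 / (2 * kP)) * ⟪ξ s, ξ s⟫ + (β / 2) * ⟪z s, z s⟫ := by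
      funext s
      rw [hV s, hz s, real_inner_self_eq_norm_sq, real_inner_self_eq_norm_sq]
    have h1 : HasDerivAt (fun s => φ (x s)) ⟪gradient φ (x t), ξ t⟫ t := by
      have := ((hφ.differentiable one_ne_zero (x t)).hasGradientAt.hasFDerivAt).comp_hasDerivAt t (hx t)
      rw [InnerProductSpace.toDual_apply_apply] at this; exact this
    have h2 : HasDerivAt (fun s => uB (x s)) (fderiv ℝ uB (x t) (ξ t)) t :=
      ((huB.differentiable one_ne_zero (x t)).hasFDerivAt).comp_hasDerivAt t (hx t)
    have h3 : HasDerivAt z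
        (kI • ((-(kP • gradient φ (x t)) - kD • ξ t) - (b • ξ t + u t + uB (x t)))
          + fderiv ℝ uB (x t) (ξ t)) t := by
      rw [funext hz]
      exact (((huI t).sub (hξ t)).const_smul kI).add h2
    have h4 := (h1.add (((hξ t).inner ℝ (hξ t)).const_mul (1 / (2 * kP)))).add
      ((h3.inner ℝ h3).const_mul (β / 2))
    rw [hVf]
    exact (h4.congr_deriv (by ring)).deriv
  -- (2) quadratic form in inner-product form
  have hstep1 : deriv V t = -(a₁ * ⟪z t, z t⟫) - a₂ * ⟪ξ t, ξ t⟫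
      + ((1 / kP - (b + kI) * β * kI) * ⟪z t, ξ t⟫ + β * ⟪z t, fderiv ℝ uB (x t) (ξ t)⟫) := by
    rw [hd]
    have hξ' : b • ξ t + u t + uB (x t)
        = -(kP • gradient φ (x t)) + (b - kD + kI) • ξ t + z t := by
      rw [hu t, hz t]; module
    have hzd : kI • ((-(kP • gradient φ (x t)) - kD • ξ t) - (b • ξ t + u t + uB (x t)))
        = (-kI) • z t + (-(kI * (b + kI))) • ξ t := by
      rw [hu t, hz t]; module
    rw [hzd, hξ', ha₁, ha₂]
    simp only [inner_add_left, inner_add_right, real_inner_smul_left, real_inner_smul_right,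
      inner_neg_left, inner_neg_right]
    rw [real_inner_comm (ξ t) (gradient φ (x t)), real_inner_comm (ξ t) (z t),
      real_inner_comm (fderiv ℝ uB (x t) (ξ t)) (z t)]
    field_simp
    ring
  -- (3) coordinate form
  have hkey : deriv V t = -(a₁ * ∑ i, z t i ^ 2) - a₂ * ∑ i, ξ t i ^ 2
      + ∑ i, ∑ j, 2 * z t i * A (x t) i j * ξ t j := by
    rw [hstep1]
    have hDsum : ⟪z t, fderiv ℝ uB (x t) (ξ t)⟫
        = ∑ j, ξ t j * ∑ i, z t i * fderiv ℝ uB (x t) (EuclideanSpace.single j 1) i := by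
      conv_lhs => rw [hdecomp (ξ t), map_sum]
      rw [inner_sum]
      refine Finset.sum_congr rfl fun j _ => ?_
      rw [map_smul, real_inner_smul_right, hinner]
    have hAsum : ∑ i, ∑ j, 2 * z t i * A (x t) i j * ξ t j
        = (1 / kP - (b + kI) * β * kI) * ∑ i, z t i * ξ t i
          + β * ∑ j, ξ t j * ∑ i, z t i * fderiv ℝ uB (x t) (EuclideanSpace.single j 1) i := by
      have expand : ∀ i j, 2 * z t i * A (x t) i j * ξ t j
          = (if i = j then (1 / kP - (b + kI) * β * kI) * (z t i * ξ t j) else 0)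
            + β * (z t i * (fderiv ℝ uB (x t) (EuclideanSpace.single j 1) i * ξ t j)) := by
        intro i j; rw [hA]; split_ifs <;> ring
      simp only [expand, Finset.sum_add_distrib]
      congr 1
      · rw [Finset.mul_sum]
        refine Finset.sum_congr rfl fun i _ => ?_
        simp [Finset.sum_ite_eq]
      · rw [Finset.sum_comm]
        simp only [Finset.mul_sum]
        exact Finset.sum_congr rfl fun j _ => Finset.sum_congr rfl fun i _ => by ring
    rw [hDsum, hAsum, hinner (z t) (ξ t), hinner (z t) (z t), hinner (ξ t) (ξ t)]
    simp [sq]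
  -- (4) conclude via the Gershgorin quadratic estimate
  obtain ⟨hle, hiff⟩ := pid_aux_quad (fun i j => A (x t) i j)
    (fun i => hrow (x t) i) (fun j => hcol (x t) j) (fun i => z t i) (fun i => ξ t i)
  rw [hkey]
  refine ⟨hle, hiff.trans ?_⟩
  constructor
  · rintro ⟨hη, hζ⟩
    exact ⟨by ext i; simpa using hη i, by ext i; simpa using hζ i⟩
  · rintro ⟨hξ0, hz0⟩
    exact ⟨fun i => by rw [hξ0]; rfl, fun i => by rw [hz0]; rfl⟩
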